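/- Fix w* > 0, γ ∈ (1,2), and T(w) = w - (γ/σ'(w*))·(σ(w) - σ(w*)). If w_t > w* and T(w_t) < w*, then R(T(w_t)) > R(w_t), where R(w) = (σ(w) - σ(w*))/(w - w*). -/

import Mathlib

noncomputable def sigmoid (w : ℝ) : ℝ := 1 / (1 + Real.exp (-w))

lemma sigmoid_hasDerivAt (w : ℝ) :
    HasDerivAt sigmoid (Real.exp (-w) / (1 + Real.exp (-w))^2) w := by
  have h1 : HasDerivAt (fun x : ℝ => 1 + Real.exp (-x)) (-Real.exp (-w)) w := by
    have := (Real.hasDerivAt_exp (-w)).comp w (hasDerivAt_neg w)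
    simpa [Function.comp_def] using this
  have h0 : (1 + Real.exp (-w)) ≠ 0 := by positivity
  have h2 := h1.inv h0
  have : sigmoid = fun x : ℝ => (1 + Real.exp (-x))⁻¹ := by
    funext x; simp [sigmoid, one_div]
  rw [this]
  exact h2.congr_deriv (by ring)

lemma deriv_sigmoid (w : ℝ) :
    deriv sigmoid w = 1 / (Real.exp w + Real.exp (-w) + 2) := by
  rw [(sigmoid_hasDerivAt w).deriv, Real.exp_neg]
  have h := Real.exp_pos w
  field_simp
  ring

lemma deriv_sigmoid_pos (w : ℝ) : 0 < deriv sigmoid w := by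
  rw [deriv_sigmoid]; positivity

lemma sigmoid_anti_deriv : StrictAntiOn (deriv sigmoid) (Set.Ici 0) := by
  intro x hx y hy hxy
  rw [deriv_sigmoid, deriv_sigmoid]
  have hc : Real.exp x + Real.exp (-x) < Real.exp y + Real.exp (-y) := by
    have habs : |x| < |y| := by
      rw [abs_of_nonneg (hx : (0:ℝ) ≤ x), abs_of_nonneg (le_of_lt (lt_of_le_of_lt hx hxy))]
      exact hxy
    have h2 := Real.cosh_lt_cosh.mpr habs
    rw [Real.cosh_eq, Real.cosh_eq] at h2
    replace this := h2
    linarith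
  apply one_div_lt_one_div_of_lt (by positivity)
  linarith

lemma sigmoid_concave : StrictConcaveOn ℝ (Set.Ici 0) sigmoid := by
  apply StrictAntiOn.strictConcaveOn_of_deriv (convex_Ici 0)
  · exact fun x _ => ((sigmoid_hasDerivAt x).differentiableAt.continuousAt).continuousWithinAt
  · rw [interior_Ici]
    exact sigmoid_anti_deriv.mono Set.Ioi_subset_Ici_self

lemma sigmoid_strictMono : StrictMono sigmoid := by
  intro x y hxy
  have h : Real.exp (-y) < Real.exp (-x) := Real.exp_lt_exp.mpr (by linarith)
  exact one_div_lt_one_div_of_lt (by positivity) (by linarith)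

lemma sigmoid_zero : sigmoid 0 = 1/2 := by simp [sigmoid]; norm_num

lemma sigmoid_symm (w : ℝ) : sigmoid (-w) = 1 - sigmoid w := by
  have h1 : (1 + Real.exp (-w)) ≠ 0 := by positivity
  have h2 : (1 + Real.exp w) ≠ 0 := by positivity
  simp only [sigmoid, neg_neg]
  rw [Real.exp_neg]
  have := Real.exp_pos w
  field_simp
  ring

theorem secant_slope_increases_after_crossing
    (wstar γ : ℝ) (hwstar : 0 < wstar) (hγ1 : 1 < γ) (hγ2 : γ < 2)
    (T : ℝ → ℝ)
    (hT : ∀ w, T w = w - (γ / deriv sigmoid wstar) * (sigmoid w - sigmoid wstar))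
    (R : ℝ → ℝ)
    (hR : ∀ w, w ≠ wstar → R w = (sigmoid w - sigmoid wstar) / (w - wstar))
    (wt : ℝ) (hwt : wstar < wt) (hcross : T wt < wstar) :
    R wt < R (T wt) := by
  set u := T wt with hu
  have hsne : wt ≠ wstar := ne_of_gt hwt
  have hd : 0 < deriv sigmoid wstar := deriv_sigmoid_pos wstar
  set d := deriv sigmoid wstar with hdd
  have hs_lt : sigmoid wstar < sigmoid wt := sigmoid_strictMono hwt
  have hΔ : 0 < wt - wstar := by linarith
  set Rt : ℝ := (sigmoid wt - sigmoid wstar) / (wt - wstar) with hRt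
  have hRpos : 0 < Rt := div_pos (by linarith) hΔ
  have hdiff : sigmoid wt - sigmoid wstar = Rt * (wt - wstar) := by
    rw [hRt]; field_simp
  -- MVT: Rt < d
  have hRd : Rt < d := by
    obtain ⟨c, hc, hceq⟩ := exists_hasDerivAt_eq_slope sigmoid (deriv sigmoid) hwt
      (fun x _ => ((sigmoid_hasDerivAt x).differentiableAt.continuousAt).continuousWithinAt)
      (fun x _ => (sigmoid_hasDerivAt x).differentiableAt.hasDerivAt)
    rw [hRt, ← hceq]
    exact sigmoid_anti_deriv (Set.mem_Ici.mpr hwstar.le)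
      (Set.mem_Ici.mpr (by linarith [hc.1])) hc.1
  have hueq : u = wt - (γ / d) * (sigmoid wt - sigmoid wstar) := hT wt
  have hu_lt : u < wstar := hcross
  -- lower bound on u
  have hkey : (γ / d) * Rt < 2 := by
    rw [div_mul_eq_mul_div, div_lt_iff₀ hd]
    nlinarith
  have hu_gt : 2 * wstar - wt < u := by
    have h2 : (γ / d) * Rt * (wt - wstar) < 2 * (wt - wstar) :=
      mul_lt_mul_of_pos_right hkey hΔ
    rw [hueq, hdiff]; nlinarith
  have hune : u ≠ wstar := ne_of_lt hu_lt
  rw [hR wt hsne, hR u hune, ← hRt]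
  have hflip : (sigmoid u - sigmoid wstar) / (u - wstar)
      = (sigmoid wstar - sigmoid u) / (wstar - u) := by
    rw [← neg_div_neg_eq]; ring_nf
  rcases le_or_gt 0 u with hu0 | hu0
  · -- u ≥ 0 : direct strict concavity secant comparison
    exact sigmoid_concave.secant_strict_mono (Set.mem_Ici.mpr hwstar.le)
      (Set.mem_Ici.mpr hu0) (Set.mem_Ici.mpr (by linarith)) hune hsne
      (by linarith)
  · -- u < 0 : reflect through 0 using sigmoid symmetry
    set a : ℝ := -u with ha
    have ha0 : 0 < a := by linarith
    have hawt : a < wt := by linarith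
    have hsu : sigmoid u = 1 - sigmoid a := by
      rw [ha]
      have h := sigmoid_symm (-u)
      rw [neg_neg] at h
      exact h
    -- Rt < slope(0, wt)
    have L1 : Rt < (sigmoid wt - sigmoid 0) / wt := by
      have := sigmoid_concave.secant_strict_mono (a := wt) (x := 0) (y := wstar)
        (Set.mem_Ici.mpr (by linarith)) (Set.mem_Ici.mpr le_rfl)
        (Set.mem_Ici.mpr hwstar.le) (by linarith) hsne.symm hwstar
      calc Rt = (sigmoid wstar - sigmoid wt) / (wstar - wt) := by
              rw [hRt, ← neg_div_neg_eq]; ring_nf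
        _ < (sigmoid 0 - sigmoid wt) / (0 - wt) := this
        _ = (sigmoid wt - sigmoid 0) / wt := by rw [← neg_div_neg_eq]; ring_nf
    -- slope(0, wt) < slope(0, wstar)
    have L2 : (sigmoid wt - sigmoid 0) / wt < (sigmoid wstar - sigmoid 0) / wstar := by
      have := sigmoid_concave.secant_strict_mono (a := 0) (x := wstar) (y := wt)
        (Set.mem_Ici.mpr le_rfl) (Set.mem_Ici.mpr hwstar.le)
        (Set.mem_Ici.mpr (by linarith)) (ne_of_gt hwstar) ((by linarith : (0:ℝ) < wt)).ne' hwt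
      simpa using this
    -- slope(0, wt) < slope(0, a)
    have L3 : (sigmoid wt - sigmoid 0) / wt < (sigmoid a - sigmoid 0) / a := by
      have := sigmoid_concave.secant_strict_mono (a := 0) (x := a) (y := wt)
        (Set.mem_Ici.mpr le_rfl) (Set.mem_Ici.mpr ha0.le)
        (Set.mem_Ici.mpr (by linarith)) (ne_of_gt ha0) ((by linarith : (0:ℝ) < wt)).ne' hawt
      simpa using this
    have hb1 : Rt * wstar < sigmoid wstar - sigmoid 0 := by
      have := L1.trans L2
      rw [lt_div_iff₀ hwstar] at this
      linarith
    have hb2 : Rt * a < sigmoid a - sigmoid 0 := by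
      have := L1.trans L3
      rw [lt_div_iff₀ ha0] at this
      linarith
    rw [hflip, lt_div_iff₀ (by linarith : (0:ℝ) < wstar - u)]
    have h0 : sigmoid 0 = 1/2 := sigmoid_zero
    rw [hsu]
    have hwu : wstar - u = wstar + a := by rw [ha]; ring
    rw [hwu]
    nlinarith
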